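/- arXiv:2107.03221 — 3 statements merged into one kernel-verified Lean document; each statement's English description precedes it below -/
import Mathlib

section
/- The only rook placement in G₂⁺ that is not non-singular is D = {α, α+β}; i.e., a subset D⊆G₂⁺ is a rook placement with γ−δ∈G₂⁺ for some distinct γ,δ∈D if and only if D = {α, α+β}. -/
open scoped RealInnerProductSpace

private lemma goodcase
    (α β : EuclideanSpace ℝ (Fin 2))
    (hαα : ⟪α, α⟫ = 1) (hββ : ⟪β, β⟫ = 3) (hαβ : ⟪α, β⟫ = -(3/2))
    (hβα : ⟪β, α⟫ = -(3/2))
    (G2P : Set (EuclideanSpace ℝ (Fin 2)))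
    (hG2P : G2P = {α, β, α + β, (2:ℝ) • α + β, (3:ℝ) • α + β, (3:ℝ) • α + (2:ℝ) • β})
    (D : Set (EuclideanSpace ℝ (Fin 2))) (hD : D ⊆ G2P)
    (hr : ∀ γ ∈ D, ∀ δ ∈ D, γ ≠ δ → ⟪γ, δ⟫ ≤ 0)
    (hab : α + β ∈ D) (ha : α ∈ D) :
    D = {α, α + β} := by
  apply subset_antisymm
  · intro x hx
    have hxG := hD hx
    rw [hG2P] at hxG
    simp only [Set.mem_insert_iff, Set.mem_singleton_iff] at hxG ⊢
    rcases hxG with h | h | h | h | h | h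
    · exact Or.inl h
    · exfalso
      have hne : x ≠ α + β := by
        rw [h]
        intro h
        have h1 := congrArg (fun x => (⟪x, α⟫ : ℝ)) h
        simp only [inner_add_left, real_inner_smul_left, hαα, hββ, hαβ, hβα] at h1
        norm_num at h1
      have hip := hr _ hx _ hab hne
      rw [h] at hip
      simp only [inner_add_left, inner_add_right, real_inner_smul_left, real_inner_smul_right,
        hαα, hββ, hαβ, hβα] at hip
      norm_num at hip
    · exact Or.inr h
    · exfalso
      have hne : x ≠ α := by
        rw [h]
        intro h
        have h1 := congrArg (fun x => (⟪x, α⟫ : ℝ)) h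
        simp only [inner_add_left, real_inner_smul_left, hαα, hββ, hαβ, hβα] at h1
        norm_num at h1
      have hip := hr _ hx _ ha hne
      rw [h] at hip
      simp only [inner_add_left, inner_add_right, real_inner_smul_left, real_inner_smul_right,
        hαα, hββ, hαβ, hβα] at hip
      norm_num at hip
    · exfalso
      have hne : x ≠ α := by
        rw [h]
        intro h
        have h1 := congrArg (fun x => (⟪x, α⟫ : ℝ)) h
        simp only [inner_add_left, real_inner_smul_left, hαα, hββ, hαβ, hβα] at h1
        norm_num at h1
      have hip := hr _ hx _ ha hne
      rw [h] at hip
      simp only [inner_add_left, inner_add_right, real_inner_smul_left, real_inner_smul_right,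
        hαα, hββ, hαβ, hβα] at hip
      norm_num at hip
    · exfalso
      have hne : x ≠ α + β := by
        rw [h]
        intro h
        have h1 := congrArg (fun x => (⟪x, α⟫ : ℝ)) h
        simp only [inner_add_left, real_inner_smul_left, hαα, hββ, hαβ, hβα] at h1
        norm_num at h1
      have hip := hr _ hx _ hab hne
      rw [h] at hip
      simp only [inner_add_left, inner_add_right, real_inner_smul_left, real_inner_smul_right,
        hαα, hββ, hαβ, hβα] at hip
      norm_num at hip
  · intro x hx
    simp only [Set.mem_insert_iff, Set.mem_singleton_iff] at hx
    rcases hx with rfl | rfl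
    · exact ha
    · exact hab

theorem stmt10
    (α β : EuclideanSpace ℝ (Fin 2))
    (hαα : ⟪α, α⟫ = 1) (hββ : ⟪β, β⟫ = 3) (hαβ : ⟪α, β⟫ = -(3/2))
    -- the set of positive roots of `G₂`
    (G2P : Set (EuclideanSpace ℝ (Fin 2)))
    (hG2P : G2P = {α, β, α + β, (2:ℝ) • α + β, (3:ℝ) • α + β, (3:ℝ) • α + (2:ℝ) • β})
    (D : Set (EuclideanSpace ℝ (Fin 2))) (hD : D ⊆ G2P) :
    ((∀ γ ∈ D, ∀ δ ∈ D, γ ≠ δ → ⟪γ, δ⟫ ≤ 0) ∧ ∃ γ ∈ D, ∃ δ ∈ D, γ ≠ δ ∧ γ - δ ∈ G2P) ↔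
      D = {α, α + β} := by
  have hβα : ⟪β, α⟫ = -(3/2) := by rw [real_inner_comm]; exact hαβ
  constructor
  · rintro ⟨hr, γ, hγD, δ, hδD, hne, hdiff⟩
    have hγG := hD hγD
    have hδG := hD hδD
    rw [hG2P] at hγG hδG hdiff
    simp only [Set.mem_insert_iff, Set.mem_singleton_iff] at hγG hδG hdiff
    rcases hγG with h | h | h | h | h | h <;>
      rcases hδG with h' | h' | h' | h' | h' | h' <;>
      first
      | exact absurd (h.trans h'.symm) hne
      | (have hip := hr _ hγD _ hδD hne
         rw [h, h'] at hip
         simp only [inner_add_left, inner_add_right, real_inner_smul_left, real_inner_smul_right,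
           hαα, hββ, hαβ, hβα] at hip
         norm_num at hip
         done)
      | (rw [h, h'] at hdiff
         rcases hdiff with hq | hq | hq | hq | hq | hq <;>
          (have h1 := congrArg (fun x => (⟪x, α⟫ : ℝ)) hq
           have h2 := congrArg (fun x => (⟪x, β⟫ : ℝ)) hq
           simp only [inner_sub_left, inner_add_left, real_inner_smul_left,
             hαα, hββ, hαβ, hβα] at h1 h2
           try norm_num at h1 h2
           try linarith)
         done)
      | (rw [h] at hγD
         rw [h'] at hδD
         exact goodcase α β hαα hββ hαβ hβα G2P hG2P D hD hr hγD hδD)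
  · rintro rfl
    have hne : α + β ≠ α := by
      intro h
      have h1 := congrArg (fun x => (⟪x, β⟫ : ℝ)) h
      simp only [inner_add_left, hαα, hββ, hαβ, hβα] at h1
      norm_num at h1
    refine ⟨?_, α + β, by simp, α, by simp, hne, ?_⟩
    · intro γ hγ δ hδ hne'
      simp only [Set.mem_insert_iff, Set.mem_singleton_iff] at hγ hδ
      rcases hγ with rfl | rfl <;> rcases hδ with rfl | rfl
      · exact absurd rfl hne'
      · simp only [inner_add_right, hαα, hαβ]; norm_num
      · simp only [inner_add_left, hαα, hβα]; norm_num
      · exact absurd rfl hne'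
    · have h : α + β - α = β := by abel
      rw [h, hG2P]
      simp
end

section
/- Let D⊆G₂⁺ be a non-singular rook placement and let ξ₁, ξ₂ : D→ℂ∖{0} be distinct maps. Then the associated coadjoint orbits do not coincide: Ω_{D,ξ₁} ≠ Ω_{D,ξ₂}. -/
open scoped RealInnerProductSpace

/-- The exponential of a (nilpotent) endomorphism, as a finite sum. -/
noncomputable def expNil {M : Type*} [AddCommGroup M] [Module ℂ M] (A : Module.End ℂ M) :
    Module.End ℂ M :=
  ∑ k ∈ Finset.range (nilpotencyClass A), (k.factorial : ℂ)⁻¹ • A ^ k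

/-- The coadjoint orbit `Ω_{D,ξ}` of the linear form `f_{D,ξ} = ∑_{γ∈D} ξ(γ) e_γ*`,
consisting of all `f_{D,ξ} ∘ exp(−ad x)`, `x ∈ 𝔫`.  Roots are encoded by indices. -/
noncomputable def coadjointOrbit {ι : Type*} {n : Type*} [LieRing n] [LieAlgebra ℂ n]
    (e : Module.Basis ι ℂ n) (D : Finset ι) (ξ : ι → ℂ) :
    Set (Module.Dual ℂ n) :=
  {lam | ∃ x : n, lam = (∑ i ∈ D, ξ i • e.coord i).comp (expNil (-(LieAlgebra.ad ℂ n x)))}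

/-- The basic subvariety `𝒪_{D,ξ} = Σ_{γ∈D} Ω_{{γ},ξ|{γ}}`. -/
noncomputable def basicSubvariety {ι : Type*} [DecidableEq ι] {n : Type*} [LieRing n] [LieAlgebra ℂ n]
    (e : Module.Basis ι ℂ n) (D : Finset ι) (ξ : ι → ℂ) :
    Set (Module.Dual ℂ n) :=
  {lam | ∃ μ : ι → Module.Dual ℂ n,
    (∀ i ∈ D, μ i ∈ coadjointOrbit e {i} ξ) ∧ lam = ∑ i ∈ D, μ i}

lemma expNil_zero' {M : Type*} [AddCommGroup M] [Module ℂ M] [Nontrivial M] :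
    expNil (0 : Module.End ℂ M) = 1 := by
  have : Nontrivial (Module.End ℂ M) := by
    obtain ⟨m, hm⟩ := exists_ne (0 : M)
    exact ⟨1, 0, fun h => hm (by simpa using LinearMap.ext_iff.mp h m)⟩
  simp [expNil, nilpotencyClass_zero]

lemma expNil_eq_range5 {M : Type*} [AddCommGroup M] [Module ℂ M] (B : Module.End ℂ M)
    (h : B ^ 5 = 0) :
    expNil B = ∑ k ∈ Finset.range 5, (k.factorial : ℂ)⁻¹ • B ^ k := by
  unfold expNil
  apply Finset.sum_subset
  · exact Finset.range_subset_range.mpr (Nat.sInf_le h)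
  · intro k _ hk
    rw [pow_eq_zero_of_le (le_of_not_gt fun hlt => hk (Finset.mem_range.mpr hlt))
      (pow_nilpotencyClass ⟨5, h⟩), smul_zero]

set_option maxHeartbeats 4000000 in
theorem stmt11 {n : Type*} [LieRing n] [LieAlgebra ℂ n]
    (α β : EuclideanSpace ℝ (Fin 2))
    (hαα : ⟪α, α⟫ = 1) (hββ : ⟪β, β⟫ = 3) (hαβ : ⟪α, β⟫ = -(3/2))
    -- the six positive roots of `G₂`: `α, β, α+β, 2α+β, 3α+β, 3α+2β`, indexed by `Fin 6`
    (root : Fin 6 → EuclideanSpace ℝ (Fin 2))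
    (hroot : root = ![α, β, α + β, (2:ℝ) • α + β, (3:ℝ) • α + β, (3:ℝ) • α + (2:ℝ) • β])
    (c₁ c₂ c₃ c₄ c₅ : ℂ)
    (hc₁ : c₁ ≠ 0) (hc₂ : c₂ ≠ 0) (hc₃ : c₃ ≠ 0) (hc₄ : c₄ ≠ 0) (hc₅ : c₅ ≠ 0)
    (e : Module.Basis (Fin 6) ℂ n)
    (h01 : ⁅e 0, e 1⁆ = c₁ • e 2)
    (h02 : ⁅e 0, e 2⁆ = c₂ • e 3)
    (h03 : ⁅e 0, e 3⁆ = c₃ • e 4)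
    (h41 : ⁅e 4, e 1⁆ = c₄ • e 5)
    (h23 : ⁅e 2, e 3⁆ = c₅ • e 5)
    (h0 : ∀ i j : Fin 6, root i + root j ∉ Set.range root → ⁅e i, e j⁆ = 0)
    (hnil : ∀ x : n, IsNilpotent (LieAlgebra.ad ℂ n x))
    (D : Finset (Fin 6))
    -- `D` is a rook placement: pairwise non-positive inner products
    (hrook : ∀ i ∈ D, ∀ j ∈ D, root i ≠ root j → ⟪root i, root j⟫ ≤ 0)
    -- `D` is non-singular: no difference of two distinct roots of `D` is a positive root
    (hns : ∀ i ∈ D, ∀ j ∈ D, root i ≠ root j → root i - root j ∉ Set.range root)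
    (ξ₁ ξ₂ : Fin 6 → ℂ) (hξ₁ : ∀ i ∈ D, ξ₁ i ≠ 0) (hξ₂ : ∀ i ∈ D, ξ₂ i ≠ 0)
    -- the maps `ξ₁, ξ₂ : D → ℂˣ` are distinct
    (hne : ∃ i ∈ D, ξ₁ i ≠ ξ₂ i) :
    coadjointOrbit e D ξ₁ ≠ coadjointOrbit e D ξ₂ := by
  intro horb
  have hβα : ⟪β, α⟫ = -(3/2) := by rw [real_inner_comm]; exact hαβ
  have hip : ∀ a b c d : ℝ, ⟪a•α+b•β, c•α+d•β⟫ = a*c - 3/2*(a*d) - 3/2*(b*c) + 3*(b*d) := by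
    intro a b c d
    simp only [inner_add_left, inner_add_right, real_inner_smul_left, real_inner_smul_right,
      hαα, hββ, hαβ, hβα]
    ring
  have hcoef : ∀ a b c d : ℝ, a•α+b•β = c•α+d•β → a = c ∧ b = d := by
    intro a b c d h
    have h1 : ⟪a•α+b•β, (1:ℝ)•α+(0:ℝ)•β⟫ = ⟪c•α+d•β, (1:ℝ)•α+(0:ℝ)•β⟫ := by rw [h]
    have h2 : ⟪a•α+b•β, (0:ℝ)•α+(1:ℝ)•β⟫ = ⟪c•α+d•β, (0:ℝ)•α+(1:ℝ)•β⟫ := by rw [h]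
    rw [hip, hip] at h1 h2
    constructor <;> linarith
  have hr0 : root 0 = (1:ℝ)•α+(0:ℝ)•β := by rw [hroot]; show α = _; module
  have hr1 : root 1 = (0:ℝ)•α+(1:ℝ)•β := by rw [hroot]; show β = _; module
  have hr2 : root 2 = (1:ℝ)•α+(1:ℝ)•β := by rw [hroot]; show α + β = _; module
  have hr3 : root 3 = (2:ℝ)•α+(1:ℝ)•β := by rw [hroot]; show (2:ℝ)•α+β = _; module
  have hr4 : root 4 = (3:ℝ)•α+(1:ℝ)•β := by rw [hroot]; show (3:ℝ)•α+β = _; module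
  have hr5 : root 5 = (3:ℝ)•α+(2:ℝ)•β := by rw [hroot]; show (3:ℝ)•α+(2:ℝ)•β = _; module
  have keymem : ∀ a b : ℝ, a•α+b•β ∈ Set.range root →
      (a=1∧b=0)∨(a=0∧b=1)∨(a=1∧b=1)∨(a=2∧b=1)∨(a=3∧b=1)∨(a=3∧b=2) := by
    rintro a b ⟨⟨v, hv⟩, hk⟩
    interval_cases v
    · rw [show (⟨0, hv⟩ : Fin 6) = (0 : Fin 6) from rfl, hr0] at hk
      exact Or.inl ⟨(hcoef _ _ _ _ hk).1.symm, (hcoef _ _ _ _ hk).2.symm⟩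
    · rw [show (⟨1, hv⟩ : Fin 6) = (1 : Fin 6) from rfl, hr1] at hk
      exact Or.inr <| Or.inl ⟨(hcoef _ _ _ _ hk).1.symm, (hcoef _ _ _ _ hk).2.symm⟩
    · rw [show (⟨2, hv⟩ : Fin 6) = (2 : Fin 6) from rfl, hr2] at hk
      exact Or.inr <| Or.inr <| Or.inl ⟨(hcoef _ _ _ _ hk).1.symm, (hcoef _ _ _ _ hk).2.symm⟩
    · rw [show (⟨3, hv⟩ : Fin 6) = (3 : Fin 6) from rfl, hr3] at hk
      exact Or.inr <| Or.inr <| Or.inr <| Or.inl ⟨(hcoef _ _ _ _ hk).1.symm, (hcoef _ _ _ _ hk).2.symm⟩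
    · rw [show (⟨4, hv⟩ : Fin 6) = (4 : Fin 6) from rfl, hr4] at hk
      exact Or.inr <| Or.inr <| Or.inr <| Or.inr <| Or.inl ⟨(hcoef _ _ _ _ hk).1.symm, (hcoef _ _ _ _ hk).2.symm⟩
    · rw [show (⟨5, hv⟩ : Fin 6) = (5 : Fin 6) from rfl, hr5] at hk
      exact Or.inr <| Or.inr <| Or.inr <| Or.inr <| Or.inr ⟨(hcoef _ _ _ _ hk).1.symm, (hcoef _ _ _ _ hk).2.symm⟩
  have nm12 : (((1:ℝ))•α+((2:ℝ))•β) ∉ Set.range root := fun hm => by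
    have := keymem 1 2 hm; norm_num at this
  have nm22 : (((2:ℝ))•α+((2:ℝ))•β) ∉ Set.range root := fun hm => by
    have := keymem 2 2 hm; norm_num at this
  have nm33 : (((3:ℝ))•α+((3:ℝ))•β) ∉ Set.range root := fun hm => by
    have := keymem 3 3 hm; norm_num at this
  have nm41 : (((4:ℝ))•α+((1:ℝ))•β) ∉ Set.range root := fun hm => by
    have := keymem 4 1 hm; norm_num at this
  have nm42 : (((4:ℝ))•α+((2:ℝ))•β) ∉ Set.range root := fun hm => by
    have := keymem 4 2 hm; norm_num at this
  have nm43 : (((4:ℝ))•α+((3:ℝ))•β) ∉ Set.range root := fun hm => by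
    have := keymem 4 3 hm; norm_num at this
  have nm52 : (((5:ℝ))•α+((2:ℝ))•β) ∉ Set.range root := fun hm => by
    have := keymem 5 2 hm; norm_num at this
  have nm53 : (((5:ℝ))•α+((3:ℝ))•β) ∉ Set.range root := fun hm => by
    have := keymem 5 3 hm; norm_num at this
  have nm63 : (((6:ℝ))•α+((3:ℝ))•β) ∉ Set.range root := fun hm => by
    have := keymem 6 3 hm; norm_num at this
  have z04 : ⁅e 0, e 4⁆ = 0 := h0 0 4 (by
    rw [hr0, hr4, show (((1:ℝ))•α+((0:ℝ))•β) + (((3:ℝ))•α+((1:ℝ))•β) = ((4:ℝ))•α+((1:ℝ))•β by module]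
    exact nm41)
  have z40 : ⁅e 4, e 0⁆ = 0 := h0 4 0 (by
    rw [hr4, hr0, show (((3:ℝ))•α+((1:ℝ))•β) + (((1:ℝ))•α+((0:ℝ))•β) = ((4:ℝ))•α+((1:ℝ))•β by module]
    exact nm41)
  have z05 : ⁅e 0, e 5⁆ = 0 := h0 0 5 (by
    rw [hr0, hr5, show (((1:ℝ))•α+((0:ℝ))•β) + (((3:ℝ))•α+((2:ℝ))•β) = ((4:ℝ))•α+((2:ℝ))•β by module]
    exact nm42)
  have z50 : ⁅e 5, e 0⁆ = 0 := h0 5 0 (by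
    rw [hr5, hr0, show (((3:ℝ))•α+((2:ℝ))•β) + (((1:ℝ))•α+((0:ℝ))•β) = ((4:ℝ))•α+((2:ℝ))•β by module]
    exact nm42)
  have z12 : ⁅e 1, e 2⁆ = 0 := h0 1 2 (by
    rw [hr1, hr2, show (((0:ℝ))•α+((1:ℝ))•β) + (((1:ℝ))•α+((1:ℝ))•β) = ((1:ℝ))•α+((2:ℝ))•β by module]
    exact nm12)
  have z21 : ⁅e 2, e 1⁆ = 0 := h0 2 1 (by
    rw [hr2, hr1, show (((1:ℝ))•α+((1:ℝ))•β) + (((0:ℝ))•α+((1:ℝ))•β) = ((1:ℝ))•α+((2:ℝ))•β by module]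
    exact nm12)
  have z13 : ⁅e 1, e 3⁆ = 0 := h0 1 3 (by
    rw [hr1, hr3, show (((0:ℝ))•α+((1:ℝ))•β) + (((2:ℝ))•α+((1:ℝ))•β) = ((2:ℝ))•α+((2:ℝ))•β by module]
    exact nm22)
  have z31 : ⁅e 3, e 1⁆ = 0 := h0 3 1 (by
    rw [hr3, hr1, show (((2:ℝ))•α+((1:ℝ))•β) + (((0:ℝ))•α+((1:ℝ))•β) = ((2:ℝ))•α+((2:ℝ))•β by module]
    exact nm22)
  have z15 : ⁅e 1, e 5⁆ = 0 := h0 1 5 (by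
    rw [hr1, hr5, show (((0:ℝ))•α+((1:ℝ))•β) + (((3:ℝ))•α+((2:ℝ))•β) = ((3:ℝ))•α+((3:ℝ))•β by module]
    exact nm33)
  have z51 : ⁅e 5, e 1⁆ = 0 := h0 5 1 (by
    rw [hr5, hr1, show (((3:ℝ))•α+((2:ℝ))•β) + (((0:ℝ))•α+((1:ℝ))•β) = ((3:ℝ))•α+((3:ℝ))•β by module]
    exact nm33)
  have z24 : ⁅e 2, e 4⁆ = 0 := h0 2 4 (by
    rw [hr2, hr4, show (((1:ℝ))•α+((1:ℝ))•β) + (((3:ℝ))•α+((1:ℝ))•β) = ((4:ℝ))•α+((2:ℝ))•β by module]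
    exact nm42)
  have z42 : ⁅e 4, e 2⁆ = 0 := h0 4 2 (by
    rw [hr4, hr2, show (((3:ℝ))•α+((1:ℝ))•β) + (((1:ℝ))•α+((1:ℝ))•β) = ((4:ℝ))•α+((2:ℝ))•β by module]
    exact nm42)
  have z25 : ⁅e 2, e 5⁆ = 0 := h0 2 5 (by
    rw [hr2, hr5, show (((1:ℝ))•α+((1:ℝ))•β) + (((3:ℝ))•α+((2:ℝ))•β) = ((4:ℝ))•α+((3:ℝ))•β by module]
    exact nm43)
  have z52 : ⁅e 5, e 2⁆ = 0 := h0 5 2 (by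
    rw [hr5, hr2, show (((3:ℝ))•α+((2:ℝ))•β) + (((1:ℝ))•α+((1:ℝ))•β) = ((4:ℝ))•α+((3:ℝ))•β by module]
    exact nm43)
  have z34 : ⁅e 3, e 4⁆ = 0 := h0 3 4 (by
    rw [hr3, hr4, show (((2:ℝ))•α+((1:ℝ))•β) + (((3:ℝ))•α+((1:ℝ))•β) = ((5:ℝ))•α+((2:ℝ))•β by module]
    exact nm52)
  have z43 : ⁅e 4, e 3⁆ = 0 := h0 4 3 (by
    rw [hr4, hr3, show (((3:ℝ))•α+((1:ℝ))•β) + (((2:ℝ))•α+((1:ℝ))•β) = ((5:ℝ))•α+((2:ℝ))•β by module]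
    exact nm52)
  have z35 : ⁅e 3, e 5⁆ = 0 := h0 3 5 (by
    rw [hr3, hr5, show (((2:ℝ))•α+((1:ℝ))•β) + (((3:ℝ))•α+((2:ℝ))•β) = ((5:ℝ))•α+((3:ℝ))•β by module]
    exact nm53)
  have z53 : ⁅e 5, e 3⁆ = 0 := h0 5 3 (by
    rw [hr5, hr3, show (((3:ℝ))•α+((2:ℝ))•β) + (((2:ℝ))•α+((1:ℝ))•β) = ((5:ℝ))•α+((3:ℝ))•β by module]
    exact nm53)
  have z45 : ⁅e 4, e 5⁆ = 0 := h0 4 5 (by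
    rw [hr4, hr5, show (((3:ℝ))•α+((1:ℝ))•β) + (((3:ℝ))•α+((2:ℝ))•β) = ((6:ℝ))•α+((3:ℝ))•β by module]
    exact nm63)
  have z54 : ⁅e 5, e 4⁆ = 0 := h0 5 4 (by
    rw [hr5, hr4, show (((3:ℝ))•α+((2:ℝ))•β) + (((3:ℝ))•α+((1:ℝ))•β) = ((6:ℝ))•α+((3:ℝ))•β by module]
    exact nm63)
  have rne03 : root 0 ≠ root 3 := by
    rw [hr0, hr3]; intro hc; have := hcoef _ _ _ _ hc; norm_num at this
  have rne04 : root 0 ≠ root 4 := by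
    rw [hr0, hr4]; intro hc; have := hcoef _ _ _ _ hc; norm_num at this
  have rne12 : root 1 ≠ root 2 := by
    rw [hr1, hr2]; intro hc; have := hcoef _ _ _ _ hc; norm_num at this
  have rne15 : root 1 ≠ root 5 := by
    rw [hr1, hr5]; intro hc; have := hcoef _ _ _ _ hc; norm_num at this
  have rne23 : root 2 ≠ root 3 := by
    rw [hr2, hr3]; intro hc; have := hcoef _ _ _ _ hc; norm_num at this
  have rne25 : root 2 ≠ root 5 := by
    rw [hr2, hr5]; intro hc; have := hcoef _ _ _ _ hc; norm_num at this
  have rne34 : root 3 ≠ root 4 := by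
    rw [hr3, hr4]; intro hc; have := hcoef _ _ _ _ hc; norm_num at this
  have rne35 : root 3 ≠ root 5 := by
    rw [hr3, hr5]; intro hc; have := hcoef _ _ _ _ hc; norm_num at this
  have rne45 : root 4 ≠ root 5 := by
    rw [hr4, hr5]; intro hc; have := hcoef _ _ _ _ hc; norm_num at this
  have rne20 : root 2 ≠ root 0 := by
    rw [hr2, hr0]; intro hc; have := hcoef _ _ _ _ hc; norm_num at this
  have hD02 : ¬((0:Fin 6) ∈ D ∧ (2:Fin 6) ∈ D) := by
    rintro ⟨hu, hv⟩
    exact hns 2 hv 0 hu rne20 ⟨1, by rw [hr1, hr2, hr0]; module⟩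
  have hD03 : ¬((0:Fin 6) ∈ D ∧ (3:Fin 6) ∈ D) := by
    rintro ⟨hu, hv⟩
    have := hrook 0 hu 3 hv rne03
    rw [hr0, hr3, hip] at this; norm_num at this
  have hD04 : ¬((0:Fin 6) ∈ D ∧ (4:Fin 6) ∈ D) := by
    rintro ⟨hu, hv⟩
    have := hrook 0 hu 4 hv rne04
    rw [hr0, hr4, hip] at this; norm_num at this
  have hD12 : ¬((1:Fin 6) ∈ D ∧ (2:Fin 6) ∈ D) := by
    rintro ⟨hu, hv⟩
    have := hrook 1 hu 2 hv rne12
    rw [hr1, hr2, hip] at this; norm_num at this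
  have hD15 : ¬((1:Fin 6) ∈ D ∧ (5:Fin 6) ∈ D) := by
    rintro ⟨hu, hv⟩
    have := hrook 1 hu 5 hv rne15
    rw [hr1, hr5, hip] at this; norm_num at this
  have hD23 : ¬((2:Fin 6) ∈ D ∧ (3:Fin 6) ∈ D) := by
    rintro ⟨hu, hv⟩
    have := hrook 2 hu 3 hv rne23
    rw [hr2, hr3, hip] at this; norm_num at this
  have hD25 : ¬((2:Fin 6) ∈ D ∧ (5:Fin 6) ∈ D) := by
    rintro ⟨hu, hv⟩
    have := hrook 2 hu 5 hv rne25
    rw [hr2, hr5, hip] at this; norm_num at this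
  have hD34 : ¬((3:Fin 6) ∈ D ∧ (4:Fin 6) ∈ D) := by
    rintro ⟨hu, hv⟩
    have := hrook 3 hu 4 hv rne34
    rw [hr3, hr4, hip] at this; norm_num at this
  have hD35 : ¬((3:Fin 6) ∈ D ∧ (5:Fin 6) ∈ D) := by
    rintro ⟨hu, hv⟩
    have := hrook 3 hu 5 hv rne35
    rw [hr3, hr5, hip] at this; norm_num at this
  have hD45 : ¬((4:Fin 6) ∈ D ∧ (5:Fin 6) ∈ D) := by
    rintro ⟨hu, hv⟩
    have := hrook 4 hu 5 hv rne45
    rw [hr4, hr5, hip] at this; norm_num at this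
  haveI : Nontrivial n := ⟨⟨e 0, 0, e.ne_zero 0⟩⟩
  have hmem : (∑ i ∈ D, ξ₁ i • e.coord i) ∈ coadjointOrbit e D ξ₁ := by
    refine ⟨0, ?_⟩
    have had0 : LieAlgebra.ad ℂ n (0:n) = 0 := by
      ext v; simp [LieAlgebra.ad_apply]
    rw [had0, neg_zero, expNil_zero', Module.End.one_eq_id, LinearMap.comp_id]
  rw [horb] at hmem
  obtain ⟨x, hx⟩ := hmem
  obtain ⟨r, hxr⟩ : ∃ r : Fin 6 → ℂ,
      x = r 0 • e 0 + r 1 • e 1 + r 2 • e 2 + r 3 • e 3 + r 4 • e 4 + r 5 • e 5 := by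
    refine ⟨fun i => e.repr x i, ?_⟩
    have := e.sum_repr x
    rw [Fin.sum_univ_six] at this
    exact this.symm
  set B : Module.End ℂ n := -(LieAlgebra.ad ℂ n x) with hBdef
  have hBv : ∀ v : n, B v = ⁅v, x⁆ := fun v => by
    rw [hBdef, LinearMap.neg_apply, LieAlgebra.ad_apply]; exact lie_skew v x
  have h10 : ⁅e 1, e 0⁆ = -(c₁ • e 2) := by rw [← lie_skew, h01]
  have h20 : ⁅e 2, e 0⁆ = -(c₂ • e 3) := by rw [← lie_skew, h02]
  have h30 : ⁅e 3, e 0⁆ = -(c₃ • e 4) := by rw [← lie_skew, h03]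
  have h14 : ⁅e 1, e 4⁆ = -(c₄ • e 5) := by rw [← lie_skew, h41]
  have h32 : ⁅e 3, e 2⁆ = -(c₅ • e 5) := by rw [← lie_skew, h23]
  have b0 : B (e 0) = (r 1*c₁) • e 2 + (r 2*c₂) • e 3 + (r 3*c₃) • e 4 := by
    rw [hBv]
    conv_lhs => rw [hxr]
    simp only [lie_add, lie_smul]
    rw [h01, h02, h03, z04, z05]
    simp only [lie_self]
    module
  have b1 : B (e 1) = (-(r 0*c₁)) • e 2 + (-(r 4*c₄)) • e 5 := by
    rw [hBv]
    conv_lhs => rw [hxr]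
    simp only [lie_add, lie_smul]
    rw [h10, z12, z13, h14, z15]
    simp only [lie_self]
    module
  have b2 : B (e 2) = (-(r 0*c₂)) • e 3 + (r 3*c₅) • e 5 := by
    rw [hBv]
    conv_lhs => rw [hxr]
    simp only [lie_add, lie_smul]
    rw [h20, z21, h23, z24, z25]
    simp only [lie_self]
    module
  have b3 : B (e 3) = (-(r 0*c₃)) • e 4 + (-(r 2*c₅)) • e 5 := by
    rw [hBv]
    conv_lhs => rw [hxr]
    simp only [lie_add, lie_smul]
    rw [h30, z31, h32, z34, z35]
    simp only [lie_self]
    module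
  have b4 : B (e 4) = (r 1*c₄) • e 5 := by
    rw [hBv]
    conv_lhs => rw [hxr]
    simp only [lie_add, lie_smul]
    rw [z40, h41, z42, z43, z45]
    simp only [lie_self]
    module
  have b5 : B (e 5) = (0:n) := by
    rw [hBv]
    conv_lhs => rw [hxr]
    simp only [lie_add, lie_smul]
    rw [z50, z51, z52, z53, z54]
    simp only [lie_self]
    module
  have b20 : B (B (e 0)) = (-(r 0*r 1*c₁*c₂)) • e 3 + (-(r 0*r 2*c₂*c₃)) • e 4 + (r 1*r 3*c₁*c₅ - r 2^2*c₂*c₅ + r 1*r 3*c₃*c₄) • e 5 := by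
    rw [b0]
    simp only [map_add, map_smul, map_zero, smul_zero, add_zero, zero_add]
    rw [b2, b3, b4]
    module
  have b30 : B (B (B (e 0))) = (r 0^2*r 1*c₁*c₂*c₃) • e 4 + (r 0*r 1*r 2*c₁*c₂*c₅ - r 0*r 1*r 2*c₂*c₃*c₄) • e 5 := by
    rw [b20]
    simp only [map_add, map_smul, map_zero, smul_zero, add_zero, zero_add]
    rw [b3, b4, b5]
    module
  have b40 : B (B (B (B (e 0)))) = (r 0^2*r 1^2*c₁*c₂*c₃*c₄) • e 5 := by
    rw [b30]
    simp only [map_add, map_smul, map_zero, smul_zero, add_zero, zero_add]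
    rw [b4, b5]
    module
  have b50 : B (B (B (B (B (e 0))))) = (0:n) := by rw [b40, map_smul, b5, smul_zero]
  have b21 : B (B (e 1)) = (r 0^2*c₁*c₂) • e 3 + (-(r 0*r 3*c₁*c₅)) • e 5 := by
    rw [b1]
    simp only [map_add, map_smul, map_zero, smul_zero, add_zero, zero_add]
    rw [b2, b5]
    module
  have b31 : B (B (B (e 1))) = (-(r 0^3*c₁*c₂*c₃)) • e 4 + (-(r 0^2*r 2*c₁*c₂*c₅)) • e 5 := by
    rw [b21]
    simp only [map_add, map_smul, map_zero, smul_zero, add_zero, zero_add]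
    rw [b3, b5]
    module
  have b41 : B (B (B (B (e 1)))) = (-(r 0^3*r 1*c₁*c₂*c₃*c₄)) • e 5 := by
    rw [b31]
    simp only [map_add, map_smul, map_zero, smul_zero, add_zero, zero_add]
    rw [b4, b5]
    module
  have b51 : B (B (B (B (B (e 1))))) = (0:n) := by rw [b41, map_smul, b5, smul_zero]
  have b22 : B (B (e 2)) = (r 0^2*c₂*c₃) • e 4 + (r 0*r 2*c₂*c₅) • e 5 := by
    rw [b2]
    simp only [map_add, map_smul, map_zero, smul_zero, add_zero, zero_add]
    rw [b3, b5]
    module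
  have b32 : B (B (B (e 2))) = (r 0^2*r 1*c₂*c₃*c₄) • e 5 := by
    rw [b22]
    simp only [map_add, map_smul, map_zero, smul_zero, add_zero, zero_add]
    rw [b4, b5]
    module
  have b42 : B (B (B (B (e 2)))) = (0:n) := by rw [b32, map_smul, b5, smul_zero]
  have b52 : B (B (B (B (B (e 2))))) = (0:n) := by rw [b42, map_zero]
  have b23 : B (B (e 3)) = (-(r 0*r 1*c₃*c₄)) • e 5 := by
    rw [b3]
    simp only [map_add, map_smul, map_zero, smul_zero, add_zero, zero_add]
    rw [b4, b5]
    module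
  have b33 : B (B (B (e 3))) = (0:n) := by rw [b23, map_smul, b5, smul_zero]
  have b43 : B (B (B (B (e 3)))) = (0:n) := by rw [b33, map_zero]
  have b53 : B (B (B (B (B (e 3))))) = (0:n) := by rw [b43, map_zero]
  have b24 : B (B (e 4)) = (0:n) := by rw [b4, map_smul, b5, smul_zero]
  have b34 : B (B (B (e 4))) = (0:n) := by rw [b24, map_zero]
  have b44 : B (B (B (B (e 4)))) = (0:n) := by rw [b34, map_zero]
  have b54 : B (B (B (B (B (e 4))))) = (0:n) := by rw [b44, map_zero]
  have b25 : B (B (e 5)) = (0:n) := by rw [b5, map_zero]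
  have b35 : B (B (B (e 5))) = (0:n) := by rw [b25, map_zero]
  have b45 : B (B (B (B (e 5)))) = (0:n) := by rw [b35, map_zero]
  have b55 : B (B (B (B (B (e 5))))) = (0:n) := by rw [b45, map_zero]
  have hpow5 : ∀ v : n, (B^5) v = B (B (B (B (B v)))) := by
    intro v
    simp only [pow_succ, pow_zero, Module.End.mul_apply, Module.End.one_apply, one_mul]
  have hB5 : B^5 = 0 := by
    refine e.ext fun j => ?_
    obtain ⟨v, hv⟩ := j
    interval_cases v
    · rw [show (⟨0, hv⟩ : Fin 6) = (0 : Fin 6) from rfl, hpow5, b50, LinearMap.zero_apply]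
    · rw [show (⟨1, hv⟩ : Fin 6) = (1 : Fin 6) from rfl, hpow5, b51, LinearMap.zero_apply]
    · rw [show (⟨2, hv⟩ : Fin 6) = (2 : Fin 6) from rfl, hpow5, b52, LinearMap.zero_apply]
    · rw [show (⟨3, hv⟩ : Fin 6) = (3 : Fin 6) from rfl, hpow5, b53, LinearMap.zero_apply]
    · rw [show (⟨4, hv⟩ : Fin 6) = (4 : Fin 6) from rfl, hpow5, b54, LinearMap.zero_apply]
    · rw [show (⟨5, hv⟩ : Fin 6) = (5 : Fin 6) from rfl, hpow5, b55, LinearMap.zero_apply]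
  have hE := expNil_eq_range5 B hB5
  have hEap : ∀ v : n, expNil B v = v + B v + (2⁻¹:ℂ) • (B (B v)) + (6⁻¹:ℂ) • (B (B (B v)))
      + (24⁻¹:ℂ) • (B (B (B (B v)))) := by
    intro v
    rw [hE]
    simp only [Finset.sum_range_succ, Finset.sum_range_zero, zero_add, LinearMap.add_apply,
      LinearMap.smul_apply, pow_succ, pow_zero, Module.End.mul_apply, Module.End.one_apply,
      Nat.factorial]
    norm_num
    try module
  have hE0 : expNil B (e 0) = (1:ℂ) • e 0 + (0:ℂ) • e 1 + (r 1*c₁:ℂ) • e 2 + (r 2*c₂ + (2⁻¹:ℂ)*(-(r 0*r 1*c₁*c₂)):ℂ) • e 3 + (r 3*c₃ + (2⁻¹:ℂ)*(-(r 0*r 2*c₂*c₃)) + (6⁻¹:ℂ)*(r 0^2*r 1*c₁*c₂*c₃):ℂ) • e 4 + ((2⁻¹:ℂ)*(r 1*r 3*c₁*c₅ - r 2^2*c₂*c₅ + r 1*r 3*c₃*c₄) + (6⁻¹:ℂ)*(r 0*r 1*r 2*c₁*c₂*c₅ - r 0*r 1*r 2*c₂*c₃*c₄) + (24⁻¹:ℂ)*(r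 0^2*r 1^2*c₁*c₂*c₃*c₄):ℂ) • e 5 := by
    rw [hEap, b40, b30, b20, b0]
    module
  have hE1 : expNil B (e 1) = (0:ℂ) • e 0 + (1:ℂ) • e 1 + (-(r 0*c₁):ℂ) • e 2 + ((2⁻¹:ℂ)*(r 0^2*c₁*c₂):ℂ) • e 3 + ((6⁻¹:ℂ)*(-(r 0^3*c₁*c₂*c₃)):ℂ) • e 4 + (-(r 4*c₄) + (2⁻¹:ℂ)*(-(r 0*r 3*c₁*c₅)) + (6⁻¹:ℂ)*(-(r 0^2*r 2*c₁*c₂*c₅)) + (24⁻¹:ℂ)*(-(r 0^3*r 1*c₁*c₂*c₃*c₄)):ℂ) • e 5 := by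
    rw [hEap, b41, b31, b21, b1]
    module
  have hE2 : expNil B (e 2) = (0:ℂ) • e 0 + (0:ℂ) • e 1 + (1:ℂ) • e 2 + (-(r 0*c₂):ℂ) • e 3 + ((2⁻¹:ℂ)*(r 0^2*c₂*c₃):ℂ) • e 4 + (r 3*c₅ + (2⁻¹:ℂ)*(r 0*r 2*c₂*c₅) + (6⁻¹:ℂ)*(r 0^2*r 1*c₂*c₃*c₄):ℂ) • e 5 := by
    rw [hEap, b42, b32, b22, b2]
    module
  have hE3 : expNil B (e 3) = (0:ℂ) • e 0 + (0:ℂ) • e 1 + (0:ℂ) • e 2 + (1:ℂ) • e 3 + (-(r 0*c₃):ℂ) • e 4 + (-(r 2*c₅) + (2⁻¹:ℂ)*(-(r 0*r 1*c₃*c₄)):ℂ) • e 5 := by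
    rw [hEap, b43, b33, b23, b3]
    module
  have hE4 : expNil B (e 4) = (0:ℂ) • e 0 + (0:ℂ) • e 1 + (0:ℂ) • e 2 + (0:ℂ) • e 3 + (1:ℂ) • e 4 + (r 1*c₄:ℂ) • e 5 := by
    rw [hEap, b44, b34, b24, b4]
    module
  have hE5 : expNil B (e 5) = (0:ℂ) • e 0 + (0:ℂ) • e 1 + (0:ℂ) • e 2 + (0:ℂ) • e 3 + (0:ℂ) • e 4 + (1:ℂ) • e 5 := by
    rw [hEap, b45, b35, b25, b5]
    module
  have hf₁ : ∀ j : Fin 6, (∑ i ∈ D, ξ₁ i • e.coord i) (e j) = (if j ∈ D then ξ₁ j else 0) := by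
    intro j
    rw [LinearMap.sum_apply]
    simp only [LinearMap.smul_apply, Module.Basis.coord_apply, Module.Basis.repr_self, smul_eq_mul,
      Finsupp.single_apply, mul_ite, mul_one, mul_zero]
    rw [Finset.sum_ite_eq]
  have hf₂ : ∀ v : n, (∑ i ∈ D, ξ₂ i • e.coord i) v
      = ∑ i : Fin 6, (if i ∈ D then ξ₂ i else 0) * e.repr v i := by
    intro v
    rw [LinearMap.sum_apply,
      ← Finset.sum_subset (Finset.subset_univ D) (fun i _ hi => by rw [if_neg hi, zero_mul])]
    exact Finset.sum_congr rfl fun i hi => by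
      rw [if_pos hi, LinearMap.smul_apply, Module.Basis.coord_apply, smul_eq_mul]
  have hcomb : ∀ a b c d f g : ℂ, (∑ i ∈ D, ξ₂ i • e.coord i)
        (a • e 0 + b • e 1 + c • e 2 + d • e 3 + f • e 4 + g • e 5)
      = (if (0:Fin 6) ∈ D then ξ₂ 0 else 0) * a + (if (1:Fin 6) ∈ D then ξ₂ 1 else 0) * b
        + (if (2:Fin 6) ∈ D then ξ₂ 2 else 0) * c + (if (3:Fin 6) ∈ D then ξ₂ 3 else 0) * d
        + (if (4:Fin 6) ∈ D then ξ₂ 4 else 0) * f + (if (5:Fin 6) ∈ D then ξ₂ 5 else 0) * g := by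
    intro a b c d f g
    rw [hf₂, Fin.sum_univ_six]
    simp only [map_add, map_smul, Module.Basis.repr_self, Finsupp.coe_add, Finsupp.coe_smul,
      Pi.add_apply, Pi.smul_apply, Finsupp.single_apply, smul_eq_mul]
    simp
    try ring
  have eq0 : (if (0:Fin 6) ∈ D then ξ₁ 0 else 0) = (if (0:Fin 6) ∈ D then ξ₂ 0 else 0) * ((1:ℂ)) + (if (1:Fin 6) ∈ D then ξ₂ 1 else 0) * ((0:ℂ)) + (if (2:Fin 6) ∈ D then ξ₂ 2 else 0) * ((r 1*c₁:ℂ)) + (if (3:Fin 6) ∈ D then ξ₂ 3 else 0) * ((r 2*c₂ + (2⁻¹:ℂ)*(-(r 0*r 1*c₁*c₂)):ℂ)) + (if (4:Fin 6) ∈ D then ξ₂ 4 else 0) * ((r 3*c₃ + (2⁻¹:ℂ)*(-(r 0*r 2*c₂*c₃)) + (6⁻¹:ℂ)*(r 0^2*r 1*c₁*c₂*c₃):ℂ)) + (if (5:Fin 6) ∈ D then ξ₂ 5 else 0) * (((2⁻¹:ℂ)*(r 1*r 3*c₁*c₅ - r 2^2*c₂*c₅ + r 1*r 3*c₃*c₄)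 + (6⁻¹:ℂ)*(r 0*r 1*r 2*c₁*c₂*c₅ - r 0*r 1*r 2*c₂*c₃*c₄) + (24⁻¹:ℂ)*(r 0^2*r 1^2*c₁*c₂*c₃*c₄):ℂ)) := by
    have h' := LinearMap.congr_fun hx (e 0)
    rw [hf₁, LinearMap.comp_apply, hE0, hcomb] at h'
    exact h'
  have eq1 : (if (1:Fin 6) ∈ D then ξ₁ 1 else 0) = (if (0:Fin 6) ∈ D then ξ₂ 0 else 0) * ((0:ℂ)) + (if (1:Fin 6) ∈ D then ξ₂ 1 else 0) * ((1:ℂ)) + (if (2:Fin 6) ∈ D then ξ₂ 2 else 0) * ((-(r 0*c₁):ℂ)) + (if (3:Fin 6) ∈ D then ξ₂ 3 else 0) * (((2⁻¹:ℂ)*(r 0^2*c₁*c₂):ℂ)) + (if (4:Fin 6) ∈ D then ξ₂ 4 else 0) * (((6⁻¹:ℂ)*(-(r 0^3*c₁*c₂*c₃)):ℂ)) + (if (5:Fin 6) ∈ D then ξ₂ 5 else 0) * ((-(r 4*c₄) + (2⁻¹:ℂ)*(-(r 0*r 3*c₁*c₅)) + (6⁻¹:ℂ)*(-(r 0^2*r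 2*c₁*c₂*c₅)) + (24⁻¹:ℂ)*(-(r 0^3*r 1*c₁*c₂*c₃*c₄)):ℂ)) := by
    have h' := LinearMap.congr_fun hx (e 1)
    rw [hf₁, LinearMap.comp_apply, hE1, hcomb] at h'
    exact h'
  have eq2 : (if (2:Fin 6) ∈ D then ξ₁ 2 else 0) = (if (0:Fin 6) ∈ D then ξ₂ 0 else 0) * ((0:ℂ)) + (if (1:Fin 6) ∈ D then ξ₂ 1 else 0) * ((0:ℂ)) + (if (2:Fin 6) ∈ D then ξ₂ 2 else 0) * ((1:ℂ)) + (if (3:Fin 6) ∈ D then ξ₂ 3 else 0) * ((-(r 0*c₂):ℂ)) + (if (4:Fin 6) ∈ D then ξ₂ 4 else 0) * (((2⁻¹:ℂ)*(r 0^2*c₂*c₃):ℂ)) + (if (5:Fin 6) ∈ D then ξ₂ 5 else 0) * ((r 3*c₅ + (2⁻¹:ℂ)*(r 0*r 2*c₂*c₅) + (6⁻¹:ℂ)*(r 0^2*r 1*c₂*c₃*c₄):ℂ)) := by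
    have h' := LinearMap.congr_fun hx (e 2)
    rw [hf₁, LinearMap.comp_apply, hE2, hcomb] at h'
    exact h'
  have eq3 : (if (3:Fin 6) ∈ D then ξ₁ 3 else 0) = (if (0:Fin 6) ∈ D then ξ₂ 0 else 0) * ((0:ℂ)) + (if (1:Fin 6) ∈ D then ξ₂ 1 else 0) * ((0:ℂ)) + (if (2:Fin 6) ∈ D then ξ₂ 2 else 0) * ((0:ℂ)) + (if (3:Fin 6) ∈ D then ξ₂ 3 else 0) * ((1:ℂ)) + (if (4:Fin 6) ∈ D then ξ₂ 4 else 0) * ((-(r 0*c₃):ℂ)) + (if (5:Fin 6) ∈ D then ξ₂ 5 else 0) * ((-(r 2*c₅) + (2⁻¹:ℂ)*(-(r 0*r 1*c₃*c₄)):ℂ)) := by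
    have h' := LinearMap.congr_fun hx (e 3)
    rw [hf₁, LinearMap.comp_apply, hE3, hcomb] at h'
    exact h'
  have eq4 : (if (4:Fin 6) ∈ D then ξ₁ 4 else 0) = (if (0:Fin 6) ∈ D then ξ₂ 0 else 0) * ((0:ℂ)) + (if (1:Fin 6) ∈ D then ξ₂ 1 else 0) * ((0:ℂ)) + (if (2:Fin 6) ∈ D then ξ₂ 2 else 0) * ((0:ℂ)) + (if (3:Fin 6) ∈ D then ξ₂ 3 else 0) * ((0:ℂ)) + (if (4:Fin 6) ∈ D then ξ₂ 4 else 0) * ((1:ℂ)) + (if (5:Fin 6) ∈ D then ξ₂ 5 else 0) * ((r 1*c₄:ℂ)) := by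
    have h' := LinearMap.congr_fun hx (e 4)
    rw [hf₁, LinearMap.comp_apply, hE4, hcomb] at h'
    exact h'
  have eq5 : (if (5:Fin 6) ∈ D then ξ₁ 5 else 0) = (if (0:Fin 6) ∈ D then ξ₂ 0 else 0) * ((0:ℂ)) + (if (1:Fin 6) ∈ D then ξ₂ 1 else 0) * ((0:ℂ)) + (if (2:Fin 6) ∈ D then ξ₂ 2 else 0) * ((0:ℂ)) + (if (3:Fin 6) ∈ D then ξ₂ 3 else 0) * ((0:ℂ)) + (if (4:Fin 6) ∈ D then ξ₂ 4 else 0) * ((0:ℂ)) + (if (5:Fin 6) ∈ D then ξ₂ 5 else 0) * ((1:ℂ)) := by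
    have h' := LinearMap.congr_fun hx (e 5)
    rw [hf₁, LinearMap.comp_apply, hE5, hcomb] at h'
    exact h'
  obtain ⟨i, hiD0, hine0⟩ := hne
  obtain ⟨v, hv⟩ := i
  interval_cases v
  · -- i = 0
    replace hiD0 : (0:Fin 6) ∈ D := hiD0
    replace hine0 : ξ₁ 0 ≠ ξ₂ 0 := hine0
    have h2n : (2:Fin 6) ∉ D := fun h => hD02 ⟨hiD0, h⟩
    have h3n : (3:Fin 6) ∉ D := fun h => hD03 ⟨hiD0, h⟩
    have h4n : (4:Fin 6) ∉ D := fun h => hD04 ⟨hiD0, h⟩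
    by_cases h5 : (5:Fin 6) ∈ D
    · have h1n : (1:Fin 6) ∉ D := fun h => hD15 ⟨h, h5⟩
      simp only [if_pos hiD0, if_pos h5, if_neg h1n, if_neg h2n, if_neg h3n, if_neg h4n] at eq0 eq2 eq3 eq4
      have hr1 : r 1 = 0 := by
        have h' : ξ₂ 5 * r 1 * c₄ = 0 := by linear_combination -eq4
        simpa [hξ₂ 5 h5, hc₄] using h'
      have hr2 : r 2 = 0 := by
        have h' : ξ₂ 5 * r 2 * c₅ = 0 := by
          rw [hr1] at eq3; linear_combination eq3
        simpa [hξ₂ 5 h5, hc₅] using h'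
      have hr3 : r 3 = 0 := by
        have h' : ξ₂ 5 * r 3 * c₅ = 0 := by
          rw [hr1, hr2] at eq2; linear_combination -eq2
        simpa [hξ₂ 5 h5, hc₅] using h'
      rw [hr1, hr2, hr3] at eq0
      exact hine0 (by linear_combination eq0)
    · simp only [if_pos hiD0, if_neg h5, if_neg h2n, if_neg h3n, if_neg h4n] at eq0
      exact hine0 (by linear_combination eq0)
  · -- i = 1
    replace hiD0 : (1:Fin 6) ∈ D := hiD0
    replace hine0 : ξ₁ 1 ≠ ξ₂ 1 := hine0
    have h2n : (2:Fin 6) ∉ D := fun h => hD12 ⟨hiD0, h⟩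
    have h5n : (5:Fin 6) ∉ D := fun h => hD15 ⟨hiD0, h⟩
    by_cases h4 : (4:Fin 6) ∈ D
    · have h3n : (3:Fin 6) ∉ D := fun h => hD34 ⟨h, h4⟩
      simp only [if_pos hiD0, if_pos h4, if_neg h2n, if_neg h3n, if_neg h5n] at eq1 eq3
      have hr0 : r 0 = 0 := by
        have h' : ξ₂ 4 * r 0 * c₃ = 0 := by linear_combination eq3
        simpa [hξ₂ 4 h4, hc₃] using h'
      rw [hr0] at eq1
      exact hine0 (by linear_combination eq1)
    · simp only [if_pos hiD0, if_neg h2n, if_neg h4, if_neg h5n] at eq1 eq2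
      by_cases h3 : (3:Fin 6) ∈ D
      · simp only [if_pos h3] at eq1 eq2
        have hr0 : r 0 = 0 := by
          have h' : ξ₂ 3 * r 0 * c₂ = 0 := by linear_combination eq2
          simpa [hξ₂ 3 h3, hc₂] using h'
        rw [hr0] at eq1
        exact hine0 (by linear_combination eq1)
      · simp only [if_neg h3] at eq1
        exact hine0 (by linear_combination eq1)
  · -- i = 2
    replace hiD0 : (2:Fin 6) ∈ D := hiD0
    replace hine0 : ξ₁ 2 ≠ ξ₂ 2 := hine0
    have h0n : (0:Fin 6) ∉ D := fun h => hD02 ⟨h, hiD0⟩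
    have h1n : (1:Fin 6) ∉ D := fun h => hD12 ⟨h, hiD0⟩
    have h3n : (3:Fin 6) ∉ D := fun h => hD23 ⟨hiD0, h⟩
    have h5n : (5:Fin 6) ∉ D := fun h => hD25 ⟨hiD0, h⟩
    by_cases h4 : (4:Fin 6) ∈ D
    · simp only [if_pos hiD0, if_pos h4, if_neg h3n, if_neg h5n] at eq2 eq3
      have hr0 : r 0 = 0 := by
        have h' : ξ₂ 4 * r 0 * c₃ = 0 := by linear_combination eq3
        simpa [hξ₂ 4 h4, hc₃] using h'
      rw [hr0] at eq2
      exact hine0 (by linear_combination eq2)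
    · simp only [if_pos hiD0, if_neg h3n, if_neg h4, if_neg h5n] at eq2
      exact hine0 (by linear_combination eq2)
  · -- i = 3
    replace hiD0 : (3:Fin 6) ∈ D := hiD0
    replace hine0 : ξ₁ 3 ≠ ξ₂ 3 := hine0
    have h4n : (4:Fin 6) ∉ D := fun h => hD34 ⟨hiD0, h⟩
    have h5n : (5:Fin 6) ∉ D := fun h => hD35 ⟨hiD0, h⟩
    simp only [if_pos hiD0, if_neg h4n, if_neg h5n] at eq3
    exact hine0 (by linear_combination eq3)
  · -- i = 4
    replace hiD0 : (4:Fin 6) ∈ D := hiD0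
    replace hine0 : ξ₁ 4 ≠ ξ₂ 4 := hine0
    have h5n : (5:Fin 6) ∉ D := fun h => hD45 ⟨hiD0, h⟩
    simp only [if_pos hiD0, if_neg h5n] at eq4
    exact hine0 (by linear_combination eq4)
  · -- i = 5
    replace hiD0 : (5:Fin 6) ∈ D := hiD0
    replace hine0 : ξ₁ 5 ≠ ξ₂ 5 := hine0
    simp only [if_pos hiD0] at eq5
    exact hine0 (by linear_combination eq5)
end

section
/- For D = {α+β, 3α+β} and any map ξ:D→ℂ∖{0}, the coadjoint orbit Ω_{D,ξ} is a proper subset of the basic subvariety 𝒪_{D,ξ}. -/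
open scoped RealInnerProductSpace

lemma expNil_eq_sum_range {M : Type*} [AddCommGroup M] [Module ℂ M] (A : Module.End ℂ M)
    {m : ℕ} (h : A ^ m = 0) :
    expNil A = ∑ k ∈ Finset.range m, (k.factorial : ℂ)⁻¹ • A ^ k := by
  have hnil : IsNilpotent A := ⟨m, h⟩
  have hle : nilpotencyClass A ≤ m := Nat.sInf_le h
  rw [expNil]
  apply Finset.sum_subset (Finset.range_subset_range.2 hle)
  intro k _ hk
  have hk' : nilpotencyClass A ≤ k := le_of_not_gt (by simpa using hk)
  rw [pow_eq_zero_of_le hk' (pow_nilpotencyClass hnil), smul_zero]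

lemma cons6_0 {γ : Type*} (a b c d f g : γ) : ![a,b,c,d,f,g] 0 = a := rfl
lemma cons6_1 {γ : Type*} (a b c d f g : γ) : ![a,b,c,d,f,g] 1 = b := rfl
lemma cons6_2 {γ : Type*} (a b c d f g : γ) : ![a,b,c,d,f,g] 2 = c := rfl
lemma cons6_3 {γ : Type*} (a b c d f g : γ) : ![a,b,c,d,f,g] 3 = d := rfl
lemma cons6_4 {γ : Type*} (a b c d f g : γ) : ![a,b,c,d,f,g] 4 = f := rfl
lemma cons6_5 {γ : Type*} (a b c d f g : γ) : ![a,b,c,d,f,g] 5 = g := rfl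

set_option maxHeartbeats 4000000 in
theorem stmt12 {n : Type*} [LieRing n] [LieAlgebra ℂ n]
    (α β : EuclideanSpace ℝ (Fin 2))
    (hαα : ⟪α, α⟫ = 1) (hββ : ⟪β, β⟫ = 3) (hαβ : ⟪α, β⟫ = -(3/2))
    -- the six positive roots of `G₂`: `α, β, α+β, 2α+β, 3α+β, 3α+2β`, indexed by `Fin 6`
    (root : Fin 6 → EuclideanSpace ℝ (Fin 2))
    (hroot : root = ![α, β, α + β, (2:ℝ) • α + β, (3:ℝ) • α + β, (3:ℝ) • α + (2:ℝ) • β])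
    (c₁ c₂ c₃ c₄ c₅ : ℂ)
    (hc₁ : c₁ ≠ 0) (hc₂ : c₂ ≠ 0) (hc₃ : c₃ ≠ 0) (hc₄ : c₄ ≠ 0) (hc₅ : c₅ ≠ 0)
    (e : Module.Basis (Fin 6) ℂ n)
    (h01 : ⁅e 0, e 1⁆ = c₁ • e 2)
    (h02 : ⁅e 0, e 2⁆ = c₂ • e 3)
    (h03 : ⁅e 0, e 3⁆ = c₃ • e 4)
    (h41 : ⁅e 4, e 1⁆ = c₄ • e 5)
    (h23 : ⁅e 2, e 3⁆ = c₅ • e 5)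
    (h0 : ∀ i j : Fin 6, root i + root j ∉ Set.range root → ⁅e i, e j⁆ = 0)
    (hnil : ∀ x : n, IsNilpotent (LieAlgebra.ad ℂ n x))
    (ξ : Fin 6 → ℂ) (hξ₂ : ξ 2 ≠ 0) (hξ₄ : ξ 4 ≠ 0) :
    coadjointOrbit e {2, 4} ξ ⊂ basicSubvariety e {2, 4} ξ := by
  classical
  have hβα : ⟪β, α⟫ = -(3/2) := by rw [real_inner_comm]; exact hαβ
  have N04 : root 0 + root 4 ∉ Set.range root := by
    rintro ⟨k, hk⟩
    rw [hroot] at hk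
    fin_cases k <;>
    · have h1 := congrArg (fun v => (⟪v, α⟫ : ℝ)) hk
      have h2 := congrArg (fun v => (⟪v, β⟫ : ℝ)) hk
      simp only [Fin.zero_eta, Fin.mk_one, Fin.reduceFinMk, cons6_0, cons6_1, cons6_2, cons6_3,
        cons6_4, cons6_5, inner_add_left, real_inner_smul_left, hαα, hββ, hαβ, hβα] at h1 h2
      linarith
  have E04 : ⁅e 0, e 4⁆ = 0 := h0 0 4 N04
  have E40 : ⁅e 4, e 0⁆ = 0 := h0 4 0 (by rw [add_comm]; exact N04)
  have N05 : root 0 + root 5 ∉ Set.range root := by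
    rintro ⟨k, hk⟩
    rw [hroot] at hk
    fin_cases k <;>
    · have h1 := congrArg (fun v => (⟪v, α⟫ : ℝ)) hk
      have h2 := congrArg (fun v => (⟪v, β⟫ : ℝ)) hk
      simp only [Fin.zero_eta, Fin.mk_one, Fin.reduceFinMk, cons6_0, cons6_1, cons6_2, cons6_3,
        cons6_4, cons6_5, inner_add_left, real_inner_smul_left, hαα, hββ, hαβ, hβα] at h1 h2
      linarith
  have E05 : ⁅e 0, e 5⁆ = 0 := h0 0 5 N05
  have E50 : ⁅e 5, e 0⁆ = 0 := h0 5 0 (by rw [add_comm]; exact N05)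
  have N12 : root 1 + root 2 ∉ Set.range root := by
    rintro ⟨k, hk⟩
    rw [hroot] at hk
    fin_cases k <;>
    · have h1 := congrArg (fun v => (⟪v, α⟫ : ℝ)) hk
      have h2 := congrArg (fun v => (⟪v, β⟫ : ℝ)) hk
      simp only [Fin.zero_eta, Fin.mk_one, Fin.reduceFinMk, cons6_0, cons6_1, cons6_2, cons6_3,
        cons6_4, cons6_5, inner_add_left, real_inner_smul_left, hαα, hββ, hαβ, hβα] at h1 h2
      linarith
  have E12 : ⁅e 1, e 2⁆ = 0 := h0 1 2 N12
  have E21 : ⁅e 2, e 1⁆ = 0 := h0 2 1 (by rw [add_comm]; exact N12)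
  have N13 : root 1 + root 3 ∉ Set.range root := by
    rintro ⟨k, hk⟩
    rw [hroot] at hk
    fin_cases k <;>
    · have h1 := congrArg (fun v => (⟪v, α⟫ : ℝ)) hk
      have h2 := congrArg (fun v => (⟪v, β⟫ : ℝ)) hk
      simp only [Fin.zero_eta, Fin.mk_one, Fin.reduceFinMk, cons6_0, cons6_1, cons6_2, cons6_3,
        cons6_4, cons6_5, inner_add_left, real_inner_smul_left, hαα, hββ, hαβ, hβα] at h1 h2
      linarith
  have E13 : ⁅e 1, e 3⁆ = 0 := h0 1 3 N13
  have E31 : ⁅e 3, e 1⁆ = 0 := h0 3 1 (by rw [add_comm]; exact N13)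
  have N15 : root 1 + root 5 ∉ Set.range root := by
    rintro ⟨k, hk⟩
    rw [hroot] at hk
    fin_cases k <;>
    · have h1 := congrArg (fun v => (⟪v, α⟫ : ℝ)) hk
      have h2 := congrArg (fun v => (⟪v, β⟫ : ℝ)) hk
      simp only [Fin.zero_eta, Fin.mk_one, Fin.reduceFinMk, cons6_0, cons6_1, cons6_2, cons6_3,
        cons6_4, cons6_5, inner_add_left, real_inner_smul_left, hαα, hββ, hαβ, hβα] at h1 h2
      linarith
  have E15 : ⁅e 1, e 5⁆ = 0 := h0 1 5 N15
  have E51 : ⁅e 5, e 1⁆ = 0 := h0 5 1 (by rw [add_comm]; exact N15)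
  have N24 : root 2 + root 4 ∉ Set.range root := by
    rintro ⟨k, hk⟩
    rw [hroot] at hk
    fin_cases k <;>
    · have h1 := congrArg (fun v => (⟪v, α⟫ : ℝ)) hk
      have h2 := congrArg (fun v => (⟪v, β⟫ : ℝ)) hk
      simp only [Fin.zero_eta, Fin.mk_one, Fin.reduceFinMk, cons6_0, cons6_1, cons6_2, cons6_3,
        cons6_4, cons6_5, inner_add_left, real_inner_smul_left, hαα, hββ, hαβ, hβα] at h1 h2
      linarith
  have E24 : ⁅e 2, e 4⁆ = 0 := h0 2 4 N24
  have E42 : ⁅e 4, e 2⁆ = 0 := h0 4 2 (by rw [add_comm]; exact N24)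
  have N25 : root 2 + root 5 ∉ Set.range root := by
    rintro ⟨k, hk⟩
    rw [hroot] at hk
    fin_cases k <;>
    · have h1 := congrArg (fun v => (⟪v, α⟫ : ℝ)) hk
      have h2 := congrArg (fun v => (⟪v, β⟫ : ℝ)) hk
      simp only [Fin.zero_eta, Fin.mk_one, Fin.reduceFinMk, cons6_0, cons6_1, cons6_2, cons6_3,
        cons6_4, cons6_5, inner_add_left, real_inner_smul_left, hαα, hββ, hαβ, hβα] at h1 h2
      linarith
  have E25 : ⁅e 2, e 5⁆ = 0 := h0 2 5 N25
  have E52 : ⁅e 5, e 2⁆ = 0 := h0 5 2 (by rw [add_comm]; exact N25)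
  have N34 : root 3 + root 4 ∉ Set.range root := by
    rintro ⟨k, hk⟩
    rw [hroot] at hk
    fin_cases k <;>
    · have h1 := congrArg (fun v => (⟪v, α⟫ : ℝ)) hk
      have h2 := congrArg (fun v => (⟪v, β⟫ : ℝ)) hk
      simp only [Fin.zero_eta, Fin.mk_one, Fin.reduceFinMk, cons6_0, cons6_1, cons6_2, cons6_3,
        cons6_4, cons6_5, inner_add_left, real_inner_smul_left, hαα, hββ, hαβ, hβα] at h1 h2
      linarith
  have E34 : ⁅e 3, e 4⁆ = 0 := h0 3 4 N34
  have E43 : ⁅e 4, e 3⁆ = 0 := h0 4 3 (by rw [add_comm]; exact N34)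
  have N35 : root 3 + root 5 ∉ Set.range root := by
    rintro ⟨k, hk⟩
    rw [hroot] at hk
    fin_cases k <;>
    · have h1 := congrArg (fun v => (⟪v, α⟫ : ℝ)) hk
      have h2 := congrArg (fun v => (⟪v, β⟫ : ℝ)) hk
      simp only [Fin.zero_eta, Fin.mk_one, Fin.reduceFinMk, cons6_0, cons6_1, cons6_2, cons6_3,
        cons6_4, cons6_5, inner_add_left, real_inner_smul_left, hαα, hββ, hαβ, hβα] at h1 h2
      linarith
  have E35 : ⁅e 3, e 5⁆ = 0 := h0 3 5 N35
  have E53 : ⁅e 5, e 3⁆ = 0 := h0 5 3 (by rw [add_comm]; exact N35)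
  have N45 : root 4 + root 5 ∉ Set.range root := by
    rintro ⟨k, hk⟩
    rw [hroot] at hk
    fin_cases k <;>
    · have h1 := congrArg (fun v => (⟪v, α⟫ : ℝ)) hk
      have h2 := congrArg (fun v => (⟪v, β⟫ : ℝ)) hk
      simp only [Fin.zero_eta, Fin.mk_one, Fin.reduceFinMk, cons6_0, cons6_1, cons6_2, cons6_3,
        cons6_4, cons6_5, inner_add_left, real_inner_smul_left, hαα, hββ, hαβ, hβα] at h1 h2
      linarith
  have E45 : ⁅e 4, e 5⁆ = 0 := h0 4 5 N45
  have E54 : ⁅e 5, e 4⁆ = 0 := h0 5 4 (by rw [add_comm]; exact N45)  -- skew-symmetric companions of the structure constants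
  have T10 : ⁅e 1, e 0⁆ = -(c₁ • e 2) := by rw [← lie_skew, h01]
  have T20 : ⁅e 2, e 0⁆ = -(c₂ • e 3) := by rw [← lie_skew, h02]
  have T30 : ⁅e 3, e 0⁆ = -(c₃ • e 4) := by rw [← lie_skew, h03]
  have T14 : ⁅e 1, e 4⁆ = -(c₄ • e 5) := by rw [← lie_skew, h41]
  have T32 : ⁅e 3, e 2⁆ = -(c₅ • e 5) := by rw [← lie_skew, h23]
  -- the key computation: value of `f ∘ exp(-ad x)` at `e 1` and `e 3`
  have main : ∀ (t₂ t₄ : ℂ) (x : n),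
      (((t₂ • e.coord 2 + t₄ • e.coord 4).comp (expNil (-(LieAlgebra.ad ℂ n x)))) (e 1)
        = -(t₂ * (c₁ * e.repr x 0)) - (6:ℂ)⁻¹ * (t₄ * (c₁ * (c₂ * (c₃ * e.repr x 0 ^ 3)))))
      ∧ (((t₂ • e.coord 2 + t₄ • e.coord 4).comp (expNil (-(LieAlgebra.ad ℂ n x)))) (e 3)
        = -(t₄ * (c₃ * e.repr x 0))) := by
    intro t₂ t₄ x
    have C20 : e.coord 2 (e 0) = 0 := by
      rw [Module.Basis.coord_apply, Module.Basis.repr_self, Finsupp.single_apply, if_neg (by decide)]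
    have C21 : e.coord 2 (e 1) = 0 := by
      rw [Module.Basis.coord_apply, Module.Basis.repr_self, Finsupp.single_apply, if_neg (by decide)]
    have C22 : e.coord 2 (e 2) = 1 := by
      rw [Module.Basis.coord_apply, Module.Basis.repr_self, Finsupp.single_eq_same]
    have C23 : e.coord 2 (e 3) = 0 := by
      rw [Module.Basis.coord_apply, Module.Basis.repr_self, Finsupp.single_apply, if_neg (by decide)]
    have C24 : e.coord 2 (e 4) = 0 := by
      rw [Module.Basis.coord_apply, Module.Basis.repr_self, Finsupp.single_apply, if_neg (by decide)]
    have C25 : e.coord 2 (e 5) = 0 := by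
      rw [Module.Basis.coord_apply, Module.Basis.repr_self, Finsupp.single_apply, if_neg (by decide)]
    have C40 : e.coord 4 (e 0) = 0 := by
      rw [Module.Basis.coord_apply, Module.Basis.repr_self, Finsupp.single_apply, if_neg (by decide)]
    have C41 : e.coord 4 (e 1) = 0 := by
      rw [Module.Basis.coord_apply, Module.Basis.repr_self, Finsupp.single_apply, if_neg (by decide)]
    have C42 : e.coord 4 (e 2) = 0 := by
      rw [Module.Basis.coord_apply, Module.Basis.repr_self, Finsupp.single_apply, if_neg (by decide)]
    have C43 : e.coord 4 (e 3) = 0 := by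
      rw [Module.Basis.coord_apply, Module.Basis.repr_self, Finsupp.single_apply, if_neg (by decide)]
    have C44 : e.coord 4 (e 4) = 1 := by
      rw [Module.Basis.coord_apply, Module.Basis.repr_self, Finsupp.single_eq_same]
    have C45 : e.coord 4 (e 5) = 0 := by
      rw [Module.Basis.coord_apply, Module.Basis.repr_self, Finsupp.single_apply, if_neg (by decide)]
    have hA0 : (LieAlgebra.ad ℂ n x) (e 0)
        = (-(e.repr x 1 * c₁)) • e 2 + (-(e.repr x 2 * c₂)) • e 3 + (-(e.repr x 3 * c₃)) • e 4 := by
      rw [LieAlgebra.ad_apply]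
      conv_lhs => rw [← e.sum_repr x, Fin.sum_univ_six]
      simp only [add_lie, smul_lie, lie_self, T10, T20, T30, E40, E50, smul_zero, smul_neg,
        smul_smul, add_zero, zero_add]
      all_goals module
    have hA1 : (LieAlgebra.ad ℂ n x) (e 1)
        = (e.repr x 0 * c₁) • e 2 + (e.repr x 4 * c₄) • e 5 := by
      rw [LieAlgebra.ad_apply]
      conv_lhs => rw [← e.sum_repr x, Fin.sum_univ_six]
      simp only [add_lie, smul_lie, lie_self, h01, E21, E31, h41, E51, smul_zero, smul_neg,
        smul_smul, add_zero, zero_add]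
      all_goals module
    have hA2 : (LieAlgebra.ad ℂ n x) (e 2)
        = (e.repr x 0 * c₂) • e 3 + (-(e.repr x 3 * c₅)) • e 5 := by
      rw [LieAlgebra.ad_apply]
      conv_lhs => rw [← e.sum_repr x, Fin.sum_univ_six]
      simp only [add_lie, smul_lie, lie_self, h02, E12, T32, E42, E52, smul_zero, smul_neg,
        smul_smul, add_zero, zero_add]
      all_goals module
    have hA3 : (LieAlgebra.ad ℂ n x) (e 3)
        = (e.repr x 0 * c₃) • e 4 + (e.repr x 2 * c₅) • e 5 := by
      rw [LieAlgebra.ad_apply]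
      conv_lhs => rw [← e.sum_repr x, Fin.sum_univ_six]
      simp only [add_lie, smul_lie, lie_self, h03, E13, h23, E43, E53, smul_zero, smul_neg,
        smul_smul, add_zero, zero_add]
      all_goals module
    have hA4 : (LieAlgebra.ad ℂ n x) (e 4)
        = (-(e.repr x 1 * c₄)) • e 5 := by
      rw [LieAlgebra.ad_apply]
      conv_lhs => rw [← e.sum_repr x, Fin.sum_univ_six]
      simp only [add_lie, smul_lie, lie_self, E04, T14, E24, E34, E54, smul_zero, smul_neg,
        smul_smul, add_zero, zero_add]
      all_goals module
    have hA5 : (LieAlgebra.ad ℂ n x) (e 5) = 0 := by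
      rw [LieAlgebra.ad_apply]
      conv_lhs => rw [← e.sum_repr x, Fin.sum_univ_six]
      simp only [add_lie, smul_lie, lie_self, E05, E15, E25, E35, E45, smul_zero, smul_neg,
        smul_smul, add_zero, zero_add]
    have st2 : ∀ a b c d : ℂ, (LieAlgebra.ad ℂ n x) (a • e 2 + b • e 3 + c • e 4 + d • e 5)
        = (a * (e.repr x 0 * c₂)) • e 3 + (b * (e.repr x 0 * c₃)) • e 4
          + (a * (-(e.repr x 3 * c₅)) + b * (e.repr x 2 * c₅) + c * (-(e.repr x 1 * c₄))) • e 5 := by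
      intro a b c d
      rw [map_add, map_add, map_add, map_smul, map_smul, map_smul, map_smul, hA2, hA3, hA4, hA5]
      all_goals module
    have st3 : ∀ p q s : ℂ, (LieAlgebra.ad ℂ n x) (p • e 3 + q • e 4 + s • e 5)
        = (p * (e.repr x 0 * c₃)) • e 4
          + (p * (e.repr x 2 * c₅) + q * (-(e.repr x 1 * c₄))) • e 5 := by
      intro p q s
      rw [map_add, map_add, map_smul, map_smul, map_smul, hA3, hA4, hA5]
      all_goals module
    have st4 : ∀ u w : ℂ, (LieAlgebra.ad ℂ n x) (u • e 4 + w • e 5)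
        = (u * (-(e.repr x 1 * c₄))) • e 5 := by
      intro u w
      rw [map_add, map_smul, map_smul, hA4, hA5]
      all_goals module
    have st5 : ∀ z : ℂ, (LieAlgebra.ad ℂ n x) (z • e 5) = 0 := by
      intro z
      rw [map_smul, hA5, smul_zero]
    have h5 : (LieAlgebra.ad ℂ n x) ^ 5 = 0 := by
      apply LinearMap.ext
      intro v
      have h1 : (LieAlgebra.ad ℂ n x) v
          = (e.repr v 0 * (-(e.repr x 1 * c₁)) + e.repr v 1 * (e.repr x 0 * c₁)) • e 2
            + (e.repr v 0 * (-(e.repr x 2 * c₂)) + e.repr v 2 * (e.repr x 0 * c₂)) • e 3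
            + (e.repr v 0 * (-(e.repr x 3 * c₃)) + e.repr v 3 * (e.repr x 0 * c₃)) • e 4
            + (e.repr v 1 * (e.repr x 4 * c₄) + e.repr v 2 * (-(e.repr x 3 * c₅))
                + e.repr v 3 * (e.repr x 2 * c₅) + e.repr v 4 * (-(e.repr x 1 * c₄))) • e 5 := by
        conv_lhs => rw [← e.sum_repr v, Fin.sum_univ_six]
        rw [map_add, map_add, map_add, map_add, map_add, map_smul, map_smul, map_smul, map_smul,
          map_smul, map_smul, hA0, hA1, hA2, hA3, hA4, hA5]
        module
      have hiter : ((LieAlgebra.ad ℂ n x) ^ 5) v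
          = (LieAlgebra.ad ℂ n x) ((LieAlgebra.ad ℂ n x) ((LieAlgebra.ad ℂ n x)
              ((LieAlgebra.ad ℂ n x) ((LieAlgebra.ad ℂ n x) v)))) := by
        rw [pow_succ, Module.End.mul_apply, pow_succ, Module.End.mul_apply, pow_succ,
          Module.End.mul_apply, pow_succ, Module.End.mul_apply, pow_one]
      rw [hiter, h1, st2, st3, st4, st5, LinearMap.zero_apply]
    have h5' : (-(LieAlgebra.ad ℂ n x)) ^ 5 = 0 := by
      rw [Odd.neg_pow (by decide), h5, neg_zero]
    have hexp : expNil (-(LieAlgebra.ad ℂ n x))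
        = ∑ k ∈ Finset.range 5, (k.factorial : ℂ)⁻¹ • (-(LieAlgebra.ad ℂ n x)) ^ k :=
      expNil_eq_sum_range _ h5'
    have m2 : ∀ v : n, ((-(LieAlgebra.ad ℂ n x)) ^ 2) v
        = (LieAlgebra.ad ℂ n x) ((LieAlgebra.ad ℂ n x) v) := by
      intro v
      rw [Even.neg_pow (by decide), pow_succ, Module.End.mul_apply, pow_one]
    have m3 : ∀ v : n, ((-(LieAlgebra.ad ℂ n x)) ^ 3) v
        = -((LieAlgebra.ad ℂ n x) ((LieAlgebra.ad ℂ n x) ((LieAlgebra.ad ℂ n x) v))) := by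
      intro v
      rw [Odd.neg_pow (by decide), LinearMap.neg_apply, pow_succ, Module.End.mul_apply, pow_succ,
        Module.End.mul_apply, pow_one]
    have m4 : ∀ v : n, ((-(LieAlgebra.ad ℂ n x)) ^ 4) v
        = (LieAlgebra.ad ℂ n x) ((LieAlgebra.ad ℂ n x) ((LieAlgebra.ad ℂ n x)
            ((LieAlgebra.ad ℂ n x) v))) := by
      intro v
      rw [Even.neg_pow (by decide), pow_succ, Module.End.mul_apply, pow_succ, Module.End.mul_apply,
        pow_succ, Module.End.mul_apply, pow_one]
    have p2 : (LieAlgebra.ad ℂ n x) ((LieAlgebra.ad ℂ n x) (e 1))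
        = ((e.repr x 0 * c₁) * (e.repr x 0 * c₂)) • e 3
          + ((e.repr x 0 * c₁) * (-(e.repr x 3 * c₅))) • e 5 := by
      rw [hA1, map_add, map_smul, map_smul, hA2, hA5]
      all_goals module
    have p3 : (LieAlgebra.ad ℂ n x) ((LieAlgebra.ad ℂ n x) ((LieAlgebra.ad ℂ n x) (e 1)))
        = ((e.repr x 0 * c₁) * (e.repr x 0 * c₂) * (e.repr x 0 * c₃)) • e 4
          + ((e.repr x 0 * c₁) * (e.repr x 0 * c₂) * (e.repr x 2 * c₅)) • e 5 := by
      rw [p2, map_add, map_smul, map_smul, hA3, hA5]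
      all_goals module
    have p4 : (LieAlgebra.ad ℂ n x) ((LieAlgebra.ad ℂ n x) ((LieAlgebra.ad ℂ n x)
          ((LieAlgebra.ad ℂ n x) (e 1))))
        = ((e.repr x 0 * c₁) * (e.repr x 0 * c₂) * (e.repr x 0 * c₃) * (-(e.repr x 1 * c₄))) • e 5 := by
      rw [p3, map_add, map_smul, map_smul, hA4, hA5]
      all_goals module
    have q2 : (LieAlgebra.ad ℂ n x) ((LieAlgebra.ad ℂ n x) (e 3))
        = ((e.repr x 0 * c₃) * (-(e.repr x 1 * c₄))) • e 5 := by
      rw [hA3, map_add, map_smul, map_smul, hA4, hA5]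
      all_goals module
    have q3 : (LieAlgebra.ad ℂ n x) ((LieAlgebra.ad ℂ n x) ((LieAlgebra.ad ℂ n x) (e 3))) = 0 := by
      rw [q2, map_smul, hA5, smul_zero]
    have q4 : (LieAlgebra.ad ℂ n x) ((LieAlgebra.ad ℂ n x) ((LieAlgebra.ad ℂ n x)
        ((LieAlgebra.ad ℂ n x) (e 3)))) = 0 := by
      rw [q3, map_zero]
    constructor
    · rw [LinearMap.comp_apply, hexp, LinearMap.sum_apply, Finset.sum_range_succ,
        Finset.sum_range_succ, Finset.sum_range_succ, Finset.sum_range_succ, Finset.sum_range_succ,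
        Finset.sum_range_zero, LinearMap.smul_apply, LinearMap.smul_apply, LinearMap.smul_apply,
        LinearMap.smul_apply, LinearMap.smul_apply, pow_zero, Module.End.one_apply, pow_one,
        LinearMap.neg_apply, m2, m3, m4, p4, p3, p2, hA1]
      simp only [zero_add, map_add, map_smul, map_neg, LinearMap.add_apply, LinearMap.smul_apply,
        C20, C21, C22, C23, C24, C25, C40, C41, C42, C43, C44, C45, smul_eq_mul, Nat.factorial,
        mul_zero, mul_one, zero_mul, one_mul, add_zero, neg_zero, mul_neg, smul_zero]
      norm_num
      ring
    · rw [LinearMap.comp_apply, hexp, LinearMap.sum_apply, Finset.sum_range_succ,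
        Finset.sum_range_succ, Finset.sum_range_succ, Finset.sum_range_succ, Finset.sum_range_succ,
        Finset.sum_range_zero, LinearMap.smul_apply, LinearMap.smul_apply, LinearMap.smul_apply,
        LinearMap.smul_apply, LinearMap.smul_apply, pow_zero, Module.End.one_apply, pow_one,
        LinearMap.neg_apply, m2, m3, m4, q4, q3, q2, hA3]
      simp only [zero_add, map_add, map_smul, map_neg, LinearMap.add_apply, LinearMap.smul_apply,
        C20, C21, C22, C23, C24, C25, C40, C41, C42, C43, C44, C45, smul_eq_mul, Nat.factorial,
        mul_zero, mul_one, zero_mul, one_mul, add_zero, neg_zero, mul_neg, smul_zero]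
      norm_num
      ring
  -- subset
  have hsub : coadjointOrbit e {2, 4} ξ ⊆ basicSubvariety e {2, 4} ξ := by
    rintro lam ⟨x, rfl⟩
    refine ⟨fun i => (ξ i • e.coord i).comp (expNil (-(LieAlgebra.ad ℂ n x))),
      fun i _ => ⟨x, by rw [Finset.sum_singleton]⟩, ?_⟩
    rw [Finset.sum_insert (by decide), Finset.sum_singleton,
      Finset.sum_insert (by decide), Finset.sum_singleton, LinearMap.add_comp]
  -- a point of the basic subvariety which is not in the orbit
  have hrepr00 : e.repr (e 0) 0 = (1:ℂ) := by simp
  have hreprz : e.repr (0:n) 0 = 0 := by simp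
  set lam0 : Module.Dual ℂ n :=
    ((ξ 2) • e.coord 2).comp (expNil (-(LieAlgebra.ad ℂ n (e 0))))
      + ((ξ 4) • e.coord 4).comp (expNil (-(LieAlgebra.ad ℂ n (0:n)))) with hlam0
  have hmem : lam0 ∈ basicSubvariety e {2, 4} ξ := by
    refine ⟨fun i => if i = 2 then ((ξ 2) • e.coord 2).comp (expNil (-(LieAlgebra.ad ℂ n (e 0))))
      else ((ξ 4) • e.coord 4).comp (expNil (-(LieAlgebra.ad ℂ n (0:n)))), ?_, ?_⟩
    · intro i hi
      rcases Finset.mem_insert.mp hi with rfl | hi'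
      · exact ⟨e 0, by rw [Finset.sum_singleton]; simp⟩
      · rw [Finset.mem_singleton] at hi'
        subst hi'
        exact ⟨(0:n), by rw [Finset.sum_singleton]; simp⟩
    · rw [Finset.sum_insert (by decide), Finset.sum_singleton]
      simp [hlam0]
  have hnot : lam0 ∉ coadjointOrbit e {2, 4} ξ := by
    rintro ⟨x, hx⟩
    rw [Finset.sum_insert (by decide), Finset.sum_singleton] at hx
    have a1 : (((ξ 2) • e.coord 2).comp (expNil (-(LieAlgebra.ad ℂ n (e 0))))) (e 3) = 0 := by
      have h := (main (ξ 2) 0 (e 0)).2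
      rw [zero_smul, add_zero] at h
      rw [h]; ring
    have a2 : (((ξ 4) • e.coord 4).comp (expNil (-(LieAlgebra.ad ℂ n (0:n))))) (e 3) = 0 := by
      have h := (main 0 (ξ 4) (0:n)).2
      rw [zero_smul, zero_add] at h
      rw [h, hreprz]; ring
    have b1 : (((ξ 2) • e.coord 2).comp (expNil (-(LieAlgebra.ad ℂ n (e 0))))) (e 1)
        = -(ξ 2 * c₁) := by
      have h := (main (ξ 2) 0 (e 0)).1
      rw [zero_smul, add_zero] at h
      rw [h, hrepr00]; ring
    have b2 : (((ξ 4) • e.coord 4).comp (expNil (-(LieAlgebra.ad ℂ n (0:n))))) (e 1) = 0 := by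
      have h := (main 0 (ξ 4) (0:n)).1
      rw [zero_smul, zero_add] at h
      rw [h, hreprz]; ring
    have h3 := congrArg (fun g : Module.Dual ℂ n => g (e 3)) hx
    have h1 := congrArg (fun g : Module.Dual ℂ n => g (e 1)) hx
    simp only [hlam0, LinearMap.add_apply] at h3 h1
    rw [a1, a2, (main (ξ 2) (ξ 4) x).2] at h3
    have hx0 : e.repr x 0 = 0 := by
      have h3' : ξ 4 * (c₃ * e.repr x 0) = 0 := by linear_combination h3
      rcases mul_eq_zero.mp h3' with h | h
      · exact absurd h hξ₄
      · rcases mul_eq_zero.mp h with h' | h'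
        · exact absurd h' hc₃
        · exact h'
    rw [b1, b2, (main (ξ 2) (ξ 4) x).1, hx0] at h1
    have h1' : ξ 2 * c₁ = 0 := by linear_combination -h1
    exact (mul_ne_zero hξ₂ hc₁) h1'
  exact (Set.ssubset_iff_of_subset hsub).mpr ⟨lam0, hmem, hnot⟩
end
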